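/- Let G be a noncyclic finite p-group of order n. Then sdim(Γ_G) = n − max{s_i : 1 ≤ i ≤ t}, where M₁,...,M_t are the maximal cyclic subgroups of G and s_i is the number of distinct subgroups of the form M_i ∩ M_j (j = 1,...,t). -/

import Mathlib

/-- Closed neighborhood of a vertex. -/
def SimpleGraph.closedNbhd {V : Type*} (Γ : SimpleGraph V) (x : V) : Set V :=
  insert x (Γ.neighborSet x)

/-- `z` strongly resolves `x` and `y`: some shortest path from `z` to `x` contains `y`,
or some shortest path from `z` to `y` contains `x`. -/
def SimpleGraph.StronglyResolves {V : Type*} (Γ : SimpleGraph V) (z x y : V) : Prop :=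
  Γ.dist z y + Γ.dist y x = Γ.dist z x ∨ Γ.dist z x + Γ.dist x y = Γ.dist z y

def SimpleGraph.IsStrongResolvingSet {V : Type*} (Γ : SimpleGraph V) (S : Set V) : Prop :=
  ∀ x y : V, x ≠ y → ∃ z ∈ S, Γ.StronglyResolves z x y

/-- Strong metric dimension. -/
noncomputable def SimpleGraph.sdim {V : Type*} (Γ : SimpleGraph V) : ℕ :=
  sInf {k | ∃ S : Set V, Γ.IsStrongResolvingSet S ∧ S.ncard = k}

/-- Equivalence: equal closed neighborhoods. -/
def SimpleGraph.nbhdSetoid {V : Type*} (Γ : SimpleGraph V) : Setoid V :=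
  ⟨fun x y => Γ.closedNbhd x = Γ.closedNbhd y,
   ⟨fun _ => rfl, Eq.symm, Eq.trans⟩⟩

/-- The reduced graph of `Γ`. -/
def SimpleGraph.reduced {V : Type*} (Γ : SimpleGraph V) :
    SimpleGraph (Quotient Γ.nbhdSetoid) where
  Adj a b := a ≠ b ∧ ∃ x y : V,
    Quotient.mk Γ.nbhdSetoid x = a ∧ Quotient.mk Γ.nbhdSetoid y = b ∧ Γ.Adj x y
  symm := by
    constructor
    rintro a b ⟨h, x, y, hx, hy, hxy⟩
    exact ⟨h.symm, y, x, hy, hx, hxy.symm⟩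
  loopless := by constructor; rintro a ⟨h, -⟩; exact h rfl

/-- The power graph of a group. -/
def powerGraph (G : Type*) [Group G] : SimpleGraph G where
  Adj x y := x ≠ y ∧ (x ∈ Subgroup.zpowers y ∨ y ∈ Subgroup.zpowers x)
  symm := by constructor; rintro x y ⟨h, h2⟩; exact ⟨h.symm, h2.symm⟩
  loopless := by constructor; rintro x ⟨h, -⟩; exact h rfl

/-- `σ n`: 1 if `n` is a prime power, otherwise the sum of the exponents in the
prime factorization of `n`. -/
noncomputable def sigmaExp (n : ℕ) : ℕ :=
  if IsPrimePow n then 1 else n.factorization.sum fun _ k => k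

/-- A maximal cyclic subgroup. -/
def IsMaxCyclic {G : Type*} [Group G] (M : Subgroup G) : Prop :=
  IsCyclic M ∧ ∀ N : Subgroup G, IsCyclic N → M ≤ N → M = N

/-- The set `𝓜_p` of maximal cyclic subgroups that are `p`-groups. -/
def maxCycP (p : ℕ) (G : Type*) [Group G] : Set (Subgroup G) :=
  {M | IsMaxCyclic M ∧ IsPGroup p M}

/-- The set of intersections of `M` with members of `𝓜_p`. -/
def inters (p : ℕ) {G : Type*} [Group G] (M : Subgroup G) : Set (Subgroup G) :=
  {C | ∃ N ∈ maxCycP p G, C = M ⊓ N}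

/-- `s_i`: the number of distinct intersections. -/
noncomputable def sNum (p : ℕ) {G : Type*} [Group G] (M : Subgroup G) : ℕ :=
  Nat.card (inters p M)

open Classical in
/-- `λ_i`, defined by `p ^ λ_i = max {|M ⊓ N| : N maximal cyclic, not a p-group}`
if maximal cyclic non-`p`-subgroups exist, and `λ_i = -1` otherwise. -/
noncomputable def lamInt (p : ℕ) {G : Type*} [Group G] (M : Subgroup G) : ℤ :=
  if {N : Subgroup G | IsMaxCyclic N ∧ ¬ IsPGroup p N}.Nonempty then
    (padicValNat p (sSup {k | ∃ N : Subgroup G, IsMaxCyclic N ∧ ¬ IsPGroup p N ∧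
        k = Nat.card ↥(M ⊓ N)}) : ℤ)
  else -1

/-- `s_i'`: the least index `u` with `p ^ λ_i < |C_{iu}|` in the chain of intersections;
equivalently one more than the number of intersections of cardinality at most `p ^ λ_i`. -/
noncomputable def sPrimeNum (p : ℕ) {G : Type*} [Group G] (M : Subgroup G) : ℕ :=
  Nat.card {C | C ∈ inters p M ∧ (Nat.card ↥C : ℚ) ≤ (p : ℚ) ^ (lamInt p M)} + 1

noncomputable def alphaTerm (p : ℕ) {G : Type*} [Group G] (M : Subgroup G) : ℤ :=
  (sNum p M : ℤ) - (sPrimeNum p M : ℤ) + lamInt p M + 2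

/-- `α_p = max_i (s_i - s_i' + λ_i + 2)`, with `α_p = 0` when `𝓜_p = ∅`. -/
noncomputable def alphaP (p : ℕ) (G : Type*) [Group G] : ℤ :=
  sSup (alphaTerm p '' maxCycP p G)

/-- A CP-group: every nonidentity element has prime power order. -/
def IsCPGroup (G : Type*) [Group G] : Prop :=
  ∀ g : G, g ≠ 1 → IsPrimePow (orderOf g)


open Subgroup

section AuxGroup

variable {G : Type*} [Group G] [Finite G] {p : ℕ}
set_option linter.unusedSectionVars false

/-- In the cyclic group generated by `y` of prime power order, elements whose order divides
that of `z` lie in `zpowers z`. -/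
lemma mem_zpowers_of_orderOf_dvd (hp : p.Prime) {y x z : G}
    {k : ℕ} (hk : orderOf y = p ^ k)
    (hx : x ∈ zpowers y) (hz : z ∈ zpowers y) (hd : orderOf x ∣ orderOf z) :
    x ∈ zpowers z := by
  have hp0 : 0 < p := hp.pos
  obtain ⟨t, ht, hzt⟩ := (Nat.dvd_prime_pow hp).mp (hk ▸ orderOf_dvd_of_mem_zpowers hz)
  set w : G := y ^ (p ^ (k - t)) with hw
  have hgcd : Nat.gcd (p ^ k) (p ^ (k - t)) = p ^ (k - t) :=
    Nat.gcd_eq_right (pow_dvd_pow p (Nat.sub_le k t))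
  have hordw : orderOf w = p ^ t := by
    rw [hw, orderOf_pow, hk, hgcd, Nat.pow_div (Nat.sub_le k t) hp0,
      Nat.sub_sub_self ht]
  have key : ∀ u : G, u ∈ zpowers y → orderOf u ∣ p ^ t → u ∈ zpowers w := by
    intro u hu hud
    obtain ⟨a, ha⟩ := (mem_powers_iff_mem_zpowers (x := y) (y := u)).mpr hu
    have hordu : orderOf u = p ^ k / Nat.gcd (p ^ k) a := by
      rw [← ha, orderOf_pow, hk]
    set g := Nat.gcd (p ^ k) a with hg
    have hgdvd : g ∣ p ^ k := Nat.gcd_dvd_left _ _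
    have hmul : g * orderOf u = p ^ k := by
      rw [hordu, Nat.mul_div_cancel' hgdvd]
    have hdvd2 : p ^ k ∣ g * p ^ t := by
      rw [← hmul]; exact mul_dvd_mul_left g hud
    have hpk : p ^ (k - t) * p ^ t = p ^ k := by
      rw [← pow_add, Nat.sub_add_cancel ht]
    have h3 : p ^ (k - t) ∣ g := by
      have : p ^ (k - t) * p ^ t ∣ g * p ^ t := hpk ▸ hdvd2
      exact (mul_dvd_mul_iff_right (by positivity : (p : ℕ) ^ t ≠ 0)).mp this
    obtain ⟨c, hc⟩ := h3.trans (Nat.gcd_dvd_right _ _)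
    refine ⟨c, ?_⟩
    show w ^ (c : ℤ) = u
    rw [← ha, hc, hw, zpow_natCast, ← pow_mul]
  have hzw : zpowers z = zpowers w := by
    have hle : zpowers z ≤ zpowers w := by
      rw [zpowers_le]
      exact key z hz (hzt ▸ dvd_rfl)
    refine Subgroup.eq_of_le_of_card_ge hle ?_
    rw [Nat.card_zpowers, Nat.card_zpowers, hordw, hzt]
  rw [hzw]
  exact key x hx (hd.trans (hzt ▸ dvd_rfl))

lemma comparable_of_mem_zpowers (hp : p.Prime) (hpg : IsPGroup p G) {x z y : G}
    (hx : x ∈ zpowers y) (hz : z ∈ zpowers y) :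
    x ∈ zpowers z ∨ z ∈ zpowers x := by
  haveI : Fact p.Prime := ⟨hp⟩
  obtain ⟨k, hk⟩ := IsPGroup.iff_orderOf.mp hpg y
  obtain ⟨s, hs, hxs⟩ := (Nat.dvd_prime_pow hp).mp (hk ▸ orderOf_dvd_of_mem_zpowers hx)
  obtain ⟨t, ht, hzt⟩ := (Nat.dvd_prime_pow hp).mp (hk ▸ orderOf_dvd_of_mem_zpowers hz)
  rcases le_total s t with h | h
  · exact Or.inl (mem_zpowers_of_orderOf_dvd hp hk hx hz
      (by rw [hxs, hzt]; exact pow_dvd_pow p h))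
  · exact Or.inr (mem_zpowers_of_orderOf_dvd hp hk hz hx
      (by rw [hxs, hzt]; exact pow_dvd_pow p h))

lemma isCyclic_zpowers' (y : G) : IsCyclic ↥(zpowers y) := by
  refine ⟨⟨⟨y, mem_zpowers y⟩, ?_⟩⟩
  rintro ⟨x, n, rfl⟩
  exact ⟨n, by ext; simp⟩

lemma isCyclic_of_le' {C M : Subgroup G} (h : C ≤ M) (hM : IsCyclic ↥M) : IsCyclic ↥C := by
  haveI := hM
  exact isCyclic_of_surjective _ (subgroupOfEquivOfLe h).surjective

lemma exists_zpowers_eq {C : Subgroup G} (h : IsCyclic ↥C) : ∃ g : G, zpowers g = C := by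
  obtain ⟨⟨g, hg⟩, hgen⟩ := h.exists_generator
  refine ⟨g, le_antisymm (zpowers_le.mpr hg) ?_⟩
  intro x hx
  obtain ⟨n, hn⟩ := hgen ⟨x, hx⟩
  exact ⟨n, by simpa [← Subtype.coe_inj] using hn⟩

lemma exists_isMaxCyclic_mem (x : G) : ∃ M : Subgroup G, IsMaxCyclic M ∧ x ∈ M := by
  have hfin : {K : Subgroup G | IsCyclic ↥K ∧ x ∈ K}.Finite := Set.toFinite _
  have hne : {K : Subgroup G | IsCyclic ↥K ∧ x ∈ K}.Nonempty :=
    ⟨zpowers x, isCyclic_zpowers' x, mem_zpowers x⟩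
  obtain ⟨M, ⟨hMc, hMx⟩, hmax⟩ := Set.Finite.exists_maximalFor id _ hfin hne
  exact ⟨M, ⟨hMc, fun N hN hMN => le_antisymm hMN (hmax ⟨hN, hMN hMx⟩ hMN)⟩, hMx⟩

lemma IsMaxCyclic.exists_zpowers {M : Subgroup G} (hM : IsMaxCyclic M) :
    ∃ y : G, zpowers y = M :=
  exists_zpowers_eq hM.1

lemma le_comparable (hp : p.Prime) (hpg : IsPGroup p G) {C D : Subgroup G} {y : G}
    (hC : C ≤ zpowers y) (hD : D ≤ zpowers y) : C ≤ D ∨ D ≤ C := by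
  obtain ⟨c, hc⟩ := exists_zpowers_eq (isCyclic_of_le' hC (isCyclic_zpowers' y))
  obtain ⟨d, hd⟩ := exists_zpowers_eq (isCyclic_of_le' hD (isCyclic_zpowers' y))
  have hcy : c ∈ zpowers y := hC (hc ▸ mem_zpowers c)
  have hdy : d ∈ zpowers y := hD (hd ▸ mem_zpowers d)
  rcases comparable_of_mem_zpowers hp hpg hcy hdy with h | h
  · exact Or.inl (hc ▸ hd ▸ zpowers_le.mpr h)
  · exact Or.inr (hd ▸ hc ▸ zpowers_le.mpr h)

end AuxGroup

section AuxGraph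

variable {G : Type*} [Group G] [Finite G] {p : ℕ}
set_option linter.unusedSectionVars false

/-- The set of intersections of maximal cyclic subgroups with `M`. -/
def interSet (M : Subgroup G) : Set (Subgroup G) :=
  {C : Subgroup G | ∃ N : Subgroup G, IsMaxCyclic N ∧ C = M ⊓ N}

lemma self_mem_interSet {M : Subgroup G} (hM : IsMaxCyclic M) : M ∈ interSet M :=
  ⟨M, hM, (inf_idem M).symm⟩

lemma interSet_le {M C : Subgroup G} (hC : C ∈ interSet M) : C ≤ M := by
  obtain ⟨N, _, rfl⟩ := hC
  exact inf_le_left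

lemma powerGraph_adj {x y : G} :
    (powerGraph G).Adj x y ↔ x ≠ y ∧ (x ∈ zpowers y ∨ y ∈ zpowers x) := Iff.rfl

lemma mem_closedNbhd_iff {x z : G} :
    z ∈ (powerGraph G).closedNbhd x ↔ (x ∈ zpowers z ∨ z ∈ zpowers x) := by
  unfold SimpleGraph.closedNbhd
  constructor
  · rintro (rfl | h)
    · exact Or.inr (mem_zpowers z)
    · exact h.2
  · intro h
    by_cases hz : z = x
    · exact Or.inl hz
    · exact Or.inr ⟨fun e => hz e.symm, h⟩

lemma mem_closedNbhd_iff_exists (hp : p.Prime) (hpg : IsPGroup p G) {x z : G} :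
    z ∈ (powerGraph G).closedNbhd x ↔
      ∃ N : Subgroup G, IsMaxCyclic N ∧ x ∈ N ∧ z ∈ N := by
  rw [mem_closedNbhd_iff]
  constructor
  · rintro (h | h)
    · obtain ⟨N, hN, hzN⟩ := exists_isMaxCyclic_mem z
      exact ⟨N, hN, (zpowers_le.mpr hzN) h, hzN⟩
    · obtain ⟨N, hN, hxN⟩ := exists_isMaxCyclic_mem x
      exact ⟨N, hN, hxN, (zpowers_le.mpr hxN) h⟩
  · rintro ⟨N, hN, hxN, hzN⟩
    obtain ⟨y, hy⟩ := hN.exists_zpowers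
    exact comparable_of_mem_zpowers hp hpg (hy ▸ hxN) (hy ▸ hzN)

lemma closedNbhd_eq_iff (hp : p.Prime) (hpg : IsPGroup p G) {a b : G} :
    (powerGraph G).closedNbhd a = (powerGraph G).closedNbhd b ↔
      ∀ N : Subgroup G, IsMaxCyclic N → (a ∈ N ↔ b ∈ N) := by
  constructor
  · intro h N hN
    obtain ⟨y, hy⟩ := hN.exists_zpowers
    constructor
    · intro haN
      have hyb : y ∈ (powerGraph G).closedNbhd b := by
        rw [← h, mem_closedNbhd_iff_exists hp hpg]
        exact ⟨N, hN, haN, hy ▸ mem_zpowers y⟩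
      rw [mem_closedNbhd_iff_exists hp hpg] at hyb
      obtain ⟨N', hN', hbN', hyN'⟩ := hyb
      have : N = N' := hN.2 N' hN'.1 (hy ▸ zpowers_le.mpr hyN')
      exact this ▸ hbN'
    · intro hbN
      have hya : y ∈ (powerGraph G).closedNbhd a := by
        rw [h, mem_closedNbhd_iff_exists hp hpg]
        exact ⟨N, hN, hbN, hy ▸ mem_zpowers y⟩
      rw [mem_closedNbhd_iff_exists hp hpg] at hya
      obtain ⟨N', hN', haN', hyN'⟩ := hya
      have : N = N' := hN.2 N' hN'.1 (hy ▸ zpowers_le.mpr hyN')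
      exact this ▸ haN'
  · intro h
    ext z
    rw [mem_closedNbhd_iff_exists hp hpg, mem_closedNbhd_iff_exists hp hpg]
    constructor
    · rintro ⟨N, hN, haN, hzN⟩
      exact ⟨N, hN, (h N hN).mp haN, hzN⟩
    · rintro ⟨N, hN, hbN, hzN⟩
      exact ⟨N, hN, (h N hN).mpr hbN, hzN⟩

/-- Distance lemmas for the power graph. -/
lemma powerGraph_reachable (x y : G) : (powerGraph G).Reachable x y := by
  have key : ∀ u : G, (powerGraph G).Reachable u 1 := by
    intro u
    by_cases hu : u = 1
    · rw [hu]
    · exact SimpleGraph.Adj.reachable ⟨hu, Or.inr (one_mem _)⟩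
  exact (key x).trans (key y).symm

lemma powerGraph_dist_le_two (x y : G) : (powerGraph G).dist x y ≤ 2 := by
  by_cases hxy : x = y
  · rw [hxy, SimpleGraph.dist_self]; omega
  by_cases ha : (powerGraph G).Adj x y
  · rw [SimpleGraph.dist_eq_one_iff_adj.mpr ha]; omega
  · have hx1 : x ≠ 1 := by
      rintro rfl
      exact ha ⟨hxy, Or.inl (one_mem _)⟩
    have hy1 : y ≠ 1 := by
      rintro rfl
      exact ha ⟨hxy, Or.inr (one_mem _)⟩
    refine le_trans (SimpleGraph.dist_le
      (SimpleGraph.Walk.cons (⟨hx1, Or.inr (one_mem _)⟩ : (powerGraph G).Adj x 1)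
        (SimpleGraph.Walk.cons (⟨fun e => hy1 e.symm, Or.inl (one_mem _)⟩ :
          (powerGraph G).Adj 1 y) SimpleGraph.Walk.nil))) le_rfl

lemma powerGraph_dist_eq_zero_iff {x y : G} : (powerGraph G).dist x y = 0 ↔ x = y :=
  (powerGraph_reachable x y).dist_eq_zero_iff

lemma powerGraph_dist_eq_two {x y : G} (hne : x ≠ y) (hna : ¬ (powerGraph G).Adj x y) :
    (powerGraph G).dist x y = 2 := by
  have h2 := powerGraph_dist_le_two x y
  have h0 : (powerGraph G).dist x y ≠ 0 := fun h => hne (powerGraph_dist_eq_zero_iff.mp h)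
  have h1 : (powerGraph G).dist x y ≠ 1 := fun h => hna (SimpleGraph.dist_eq_one_iff_adj.mp h)
  omega

lemma stronglyResolves_self_left (x y : G) : (powerGraph G).StronglyResolves x x y :=
  Or.inr (by rw [SimpleGraph.dist_self]; ring)

lemma stronglyResolves_self_right (x y : G) : (powerGraph G).StronglyResolves y x y :=
  Or.inl (by rw [SimpleGraph.dist_self]; ring)

lemma eq_of_stronglyResolves_not_adj {x y z : G} (hne : x ≠ y)
    (hna : ¬ (powerGraph G).Adj x y) (h : (powerGraph G).StronglyResolves z x y) :
    z = x ∨ z = y := by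
  have hxy2 : (powerGraph G).dist x y = 2 := powerGraph_dist_eq_two hne hna
  have hyx2 : (powerGraph G).dist y x = 2 := by rwa [SimpleGraph.dist_comm]
  rcases h with h | h
  · right
    have := powerGraph_dist_le_two z x
    rw [hyx2] at h
    have : (powerGraph G).dist z y = 0 := by omega
    exact powerGraph_dist_eq_zero_iff.mp this
  · left
    have := powerGraph_dist_le_two z y
    rw [hxy2] at h
    have : (powerGraph G).dist z x = 0 := by omega
    exact powerGraph_dist_eq_zero_iff.mp this

lemma dist_eq_one_of_mem_closedNbhd {x z : G} (h : z ∈ (powerGraph G).closedNbhd x)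
    (hne : z ≠ x) : (powerGraph G).dist z x = 1 := by
  rcases mem_closedNbhd_iff.mp h with h' | h'
  · exact SimpleGraph.dist_eq_one_iff_adj.mpr ⟨hne, Or.inr h'⟩
  · exact SimpleGraph.dist_eq_one_iff_adj.mpr ⟨hne, Or.inl h'⟩

lemma dist_eq_two_of_not_mem_closedNbhd {x z : G} (h : z ∉ (powerGraph G).closedNbhd x) :
    (powerGraph G).dist z x = 2 := by
  have hne : z ≠ x := by
    rintro rfl
    exact h (Set.mem_insert z _)
  refine powerGraph_dist_eq_two hne fun ha => h ?_
  exact mem_closedNbhd_iff.mpr (Or.elim ha.2 Or.inr Or.inl)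

lemma eq_of_stronglyResolves_same_nbhd {x y z : G}
    (ha : (powerGraph G).Adj x y)
    (hnb : (powerGraph G).closedNbhd x = (powerGraph G).closedNbhd y)
    (h : (powerGraph G).StronglyResolves z x y) : z = x ∨ z = y := by
  by_contra hc
  push_neg at hc
  obtain ⟨hzx, hzy⟩ := hc
  have hxy1 : (powerGraph G).dist x y = 1 := SimpleGraph.dist_eq_one_iff_adj.mpr ha
  have hyx1 : (powerGraph G).dist y x = 1 := SimpleGraph.dist_eq_one_iff_adj.mpr ha.symm
  have heq : (powerGraph G).dist z x = (powerGraph G).dist z y := by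
    by_cases hz : z ∈ (powerGraph G).closedNbhd x
    · rw [dist_eq_one_of_mem_closedNbhd hz hzx,
        dist_eq_one_of_mem_closedNbhd (hnb ▸ hz) hzy]
    · rw [dist_eq_two_of_not_mem_closedNbhd hz,
        dist_eq_two_of_not_mem_closedNbhd (hnb ▸ hz)]
  rcases h with h | h
  · rw [hyx1, heq] at h; omega
  · rw [hxy1, heq] at h; omega

/-- A "good" set: pairwise adjacent with pairwise distinct closed neighborhoods. -/
def GoodSet (T : Set G) : Prop :=
  T.Pairwise fun a b => (powerGraph G).Adj a b ∧
    (powerGraph G).closedNbhd a ≠ (powerGraph G).closedNbhd b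

end AuxGraph
section Main

variable {G : Type*} [Group G] [Finite G] {p : ℕ}
set_option linter.unusedSectionVars false

lemma goodSet_ncard_le_interSet (hp : p.Prime) (hpg : IsPGroup p G) {T : Set G}
    (hT : GoodSet T) :
    ∃ M : Subgroup G, IsMaxCyclic M ∧ T.ncard ≤ (interSet M).ncard := by
  obtain ⟨M₀, hM₀, -⟩ := exists_isMaxCyclic_mem (1 : G)
  rcases T.eq_empty_or_nonempty with rfl | hne
  · exact ⟨M₀, hM₀, by simp⟩
  obtain ⟨t₀, ht₀, hmax⟩ :=
    Set.Finite.exists_maximalFor (fun t : G => zpowers t) T (Set.toFinite T) hne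
  have hup : ∀ t ∈ T, t ∈ zpowers t₀ := by
    intro t ht
    by_cases h : t = t₀
    · rw [h]; exact mem_zpowers t₀
    rcases (hT ht₀ ht (fun e => h e.symm)).1.2 with h' | h'
    · have heq := hmax ht (zpowers_le.mpr h')
      exact (show zpowers t ≤ zpowers t₀ from heq) (mem_zpowers t)
    · exact h'
  obtain ⟨M, hM, ht₀M⟩ := exists_isMaxCyclic_mem t₀
  have hTM : ∀ t ∈ T, t ∈ M := fun t ht => (zpowers_le.mpr ht₀M) (hup t ht)
  obtain ⟨y, hy⟩ := hM.exists_zpowers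
  have hmin : ∀ t ∈ T, ∃ C : Subgroup G, (C ∈ interSet M ∧ t ∈ C) ∧
      ∀ D : Subgroup G, D ∈ interSet M → t ∈ D → C ≤ D := by
    intro t ht
    have hfin : {C : Subgroup G | C ∈ interSet M ∧ t ∈ C}.Finite := Set.toFinite _
    have hne' : {C : Subgroup G | C ∈ interSet M ∧ t ∈ C}.Nonempty :=
      ⟨M, self_mem_interSet hM, hTM t ht⟩
    obtain ⟨C, hC, hCmin⟩ := Set.Finite.exists_minimalFor id _ hfin hne'
    refine ⟨C, hC, ?_⟩
    intro D hD htD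
    rcases le_comparable hp hpg ((interSet_le hC.1).trans (le_of_eq hy.symm))
      ((interSet_le hD).trans (le_of_eq hy.symm)) with h | h
    · exact h
    · have heq := hCmin ⟨hD, htD⟩ h
      exact heq
  choose! f hf₁ hf₂ using hmin
  have hinj : Set.InjOn f T := by
    intro a ha b hb hab
    by_contra hne'
    refine (hT ha hb hne').2 ?_
    rw [closedNbhd_eq_iff hp hpg]
    intro N hN
    constructor
    · intro haN
      have h1 : f a ≤ M ⊓ N := hf₂ a ha (M ⊓ N) ⟨N, hN, rfl⟩
        (Subgroup.mem_inf.mpr ⟨hTM a ha, haN⟩)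
      have hbfa : b ∈ f a := hab ▸ (hf₁ b hb).2
      exact (Subgroup.mem_inf.mp (h1 hbfa)).2
    · intro hbN
      have h1 : f b ≤ M ⊓ N := hf₂ b hb (M ⊓ N) ⟨N, hN, rfl⟩
        (Subgroup.mem_inf.mpr ⟨hTM b hb, hbN⟩)
      have hafb : a ∈ f b := hab ▸ (hf₁ a ha).2
      exact (Subgroup.mem_inf.mp (h1 hafb)).2
  refine ⟨M, hM, ?_⟩
  rw [← Set.ncard_image_of_injOn hinj]
  refine Set.ncard_le_ncard ?_ (Set.toFinite _)
  rintro _ ⟨t, ht, rfl⟩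
  exact (hf₁ t ht).1

lemma exists_goodSet (hp : p.Prime) (hpg : IsPGroup p G) {M : Subgroup G}
    (hM : IsMaxCyclic M) :
    ∃ T : Set G, GoodSet T ∧ T.ncard = (interSet M).ncard := by
  obtain ⟨y, hy⟩ := hM.exists_zpowers
  have hgen : ∀ C ∈ interSet M, ∃ g : G, zpowers g = C :=
    fun C hC => exists_zpowers_eq (isCyclic_of_le' (interSet_le hC) hM.1)
  choose! gen hgen using hgen
  have hmemM : ∀ C ∈ interSet M, gen C ∈ zpowers y := by
    intro C hC
    have h1 : gen C ∈ zpowers (gen C) := mem_zpowers (gen C)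
    rw [hgen C hC] at h1
    rw [hy]
    exact interSet_le hC h1
  refine ⟨gen '' interSet M, ?_, ?_⟩
  · rintro _ ⟨C, hC, rfl⟩ _ ⟨D, hD, rfl⟩ hne
    have hCD : C ≠ D := fun e => hne (e ▸ rfl)
    refine ⟨⟨hne, comparable_of_mem_zpowers hp hpg (hmemM C hC) (hmemM D hD)⟩, ?_⟩
    intro hnb
    apply hCD
    rw [closedNbhd_eq_iff hp hpg] at hnb
    obtain ⟨NC, hNC, hCeq⟩ := hC
    obtain ⟨ND, hND, hDeq⟩ := hD
    have hgC : gen C ∈ C := by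
      have h1 : gen C ∈ zpowers (gen C) := mem_zpowers (gen C)
      rwa [hgen C ⟨NC, hNC, hCeq⟩] at h1
    have hgD : gen D ∈ D := by
      have h1 : gen D ∈ zpowers (gen D) := mem_zpowers (gen D)
      rwa [hgen D ⟨ND, hND, hDeq⟩] at h1
    apply le_antisymm
    · -- C ≤ D
      rw [← hgen C ⟨NC, hNC, hCeq⟩, zpowers_le]
      have hgDND : gen D ∈ ND := by
        have h2 : gen D ∈ M ⊓ ND := by rw [← hDeq]; exact hgD
        exact (Subgroup.mem_inf.mp h2).2
      have hgCND : gen C ∈ ND := (hnb ND hND).mpr hgDND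
      have hgCM : gen C ∈ M := interSet_le ⟨NC, hNC, hCeq⟩ hgC
      rw [hDeq]
      exact Subgroup.mem_inf.mpr ⟨hgCM, hgCND⟩
    · -- D ≤ C
      rw [← hgen D ⟨ND, hND, hDeq⟩, zpowers_le]
      have hgCNC : gen C ∈ NC := by
        have h2 : gen C ∈ M ⊓ NC := by rw [← hCeq]; exact hgC
        exact (Subgroup.mem_inf.mp h2).2
      have hgDNC : gen D ∈ NC := (hnb NC hNC).mp hgCNC
      have hgDM : gen D ∈ M := interSet_le ⟨ND, hND, hDeq⟩ hgD
      rw [hCeq]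
      exact Subgroup.mem_inf.mpr ⟨hgDM, hgDNC⟩
  · apply Set.ncard_image_of_injOn
    intro C hC D hD he
    rw [← hgen C hC, ← hgen D hD, he]

end Main
theorem stmt_11 {G : Type*} [Group G] [Finite G] (p : ℕ) (hp : p.Prime)
    (hpg : IsPGroup p G) (hnc : ¬ IsCyclic G) :
    ((powerGraph G).sdim : ℤ) = (Nat.card G : ℤ) -
      (sSup ((fun M : Subgroup G =>
        Nat.card {C : Subgroup G | ∃ N : Subgroup G, IsMaxCyclic N ∧ C = M ⊓ N}) ''
        {M : Subgroup G | IsMaxCyclic M}) : ℤ) := by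
  classical
  set F : Subgroup G → ℕ := fun M : Subgroup G =>
    Nat.card {C : Subgroup G | ∃ N : Subgroup G, IsMaxCyclic N ∧ C = M ⊓ N} with hFdef
  set mset : Set (Subgroup G) := {M : Subgroup G | IsMaxCyclic M} with hmsetdef
  have hF : ∀ M : Subgroup G, F M = (interSet M).ncard := by
    intro M
    rw [hFdef]
    exact Nat.card_coe_set_eq _
  have hmne : mset.Nonempty := ⟨_, (exists_isMaxCyclic_mem (1 : G)).choose_spec.1⟩
  have hbdd : BddAbove (F '' mset) := (Set.toFinite _).bddAbove
  set m := sSup (F '' mset) with hm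
  obtain ⟨Mx, hMx, hFMx⟩ : ∃ M ∈ mset, F M = m :=
    Nat.sSup_mem (hmne.image F) hbdd
  obtain ⟨T, hTgood, hTcard⟩ := exists_goodSet hp hpg hMx
  have hTm : T.ncard = m := by rw [hTcard, ← hF, hFMx]
  have hle_m : ∀ T' : Set G, GoodSet T' → T'.ncard ≤ m := by
    intro T' h
    obtain ⟨M, hM, hle⟩ := goodSet_ncard_le_interSet hp hpg h
    refine hle.trans ?_
    rw [← hF]
    exact le_csSup hbdd ⟨M, hM, rfl⟩
  set n := Nat.card G with hn
  have hcompl : ∀ S : Set G, S.ncard + Sᶜ.ncard = n := by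
    intro S
    rw [hn]
    exact Set.ncard_add_ncard_compl S
  -- Tᶜ is a strong resolving set
  have hSrs : (powerGraph G).IsStrongResolvingSet Tᶜ := by
    intro x y hxy
    by_cases hx : x ∈ T
    · by_cases hy' : y ∈ T
      · obtain ⟨hadj, hnbne⟩ := hTgood hx hy' hxy
        have hex : ∃ z, (z ∈ (powerGraph G).closedNbhd x ∧ z ∉ (powerGraph G).closedNbhd y) ∨
            (z ∈ (powerGraph G).closedNbhd y ∧ z ∉ (powerGraph G).closedNbhd x) := by
          by_contra hc
          push_neg at hc
          apply hnbne
          ext z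
          have := hc z
          tauto
        obtain ⟨z, hz⟩ := hex
        have hxNy : x ∈ (powerGraph G).closedNbhd y :=
          mem_closedNbhd_iff.mpr hadj.2.symm
        have hyNx : y ∈ (powerGraph G).closedNbhd x :=
          mem_closedNbhd_iff.mpr hadj.2
        rcases hz with ⟨h1, h2⟩ | ⟨h1, h2⟩
        · -- z ∈ N[x] \ N[y]
          have hzy : z ≠ y := by rintro rfl; exact h2 (Set.mem_insert z _)
          have hzx : z ≠ x := by rintro rfl; exact h2 hxNy
          refine ⟨z, ?_, Or.inr ?_⟩
          · intro hzT
            have hne2 : z ≠ y := hzy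
            obtain ⟨hadj2, -⟩ := hTgood hzT hy' hne2
            exact h2 (mem_closedNbhd_iff.mpr hadj2.2.symm)
          · rw [dist_eq_one_of_mem_closedNbhd h1 hzx,
              SimpleGraph.dist_eq_one_iff_adj.mpr hadj,
              dist_eq_two_of_not_mem_closedNbhd h2]
        · -- z ∈ N[y] \ N[x]
          have hzx : z ≠ x := by rintro rfl; exact h2 (Set.mem_insert z _)
          have hzy : z ≠ y := by rintro rfl; exact h2 hyNx
          refine ⟨z, ?_, Or.inl ?_⟩
          · intro hzT
            obtain ⟨hadj2, -⟩ := hTgood hzT hx hzx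
            exact h2 (mem_closedNbhd_iff.mpr hadj2.2.symm)
          · rw [dist_eq_one_of_mem_closedNbhd h1 hzy,
              SimpleGraph.dist_eq_one_iff_adj.mpr hadj.symm,
              dist_eq_two_of_not_mem_closedNbhd h2]
      · exact ⟨y, hy', stronglyResolves_self_right x y⟩
    · exact ⟨x, hx, stronglyResolves_self_left x y⟩
  -- lower bound for every strong resolving set
  have hlower : ∀ S : Set G, (powerGraph G).IsStrongResolvingSet S → n - m ≤ S.ncard := by
    intro S hS
    have hgood : GoodSet Sᶜ := by
      intro a ha b hb hne
      obtain ⟨z, hzS, hzr⟩ := hS a b hne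
      have hadj : (powerGraph G).Adj a b := by
        by_contra hna
        rcases eq_of_stronglyResolves_not_adj hne hna hzr with rfl | rfl
        · exact ha hzS
        · exact hb hzS
      refine ⟨hadj, fun hnb => ?_⟩
      rcases eq_of_stronglyResolves_same_nbhd hadj hnb hzr with rfl | rfl
      · exact ha hzS
      · exact hb hzS
    have h1 : Sᶜ.ncard ≤ m := hle_m _ hgood
    have h2 := hcompl S
    omega
  have hsdim : (powerGraph G).sdim = n - m := by
    have hmem : n - m ∈ {k | ∃ S : Set G, (powerGraph G).IsStrongResolvingSet S ∧
        S.ncard = k} := by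
      refine ⟨Tᶜ, hSrs, ?_⟩
      have := hcompl T
      omega
    apply le_antisymm
    · exact Nat.sInf_le hmem
    · refine le_csInf ⟨_, hmem⟩ ?_
      rintro k ⟨S, hs, rfl⟩
      exact hlower S hs
  have hmn : m ≤ n := by
    rw [← hTm, hn, ← Set.ncard_univ]
    exact Set.ncard_le_ncard (Set.subset_univ T) (Set.toFinite _)
  rw [hsdim, Nat.cast_sub hmn]
  congr 1
  have hub : ∀ M : Subgroup G, M ∈ mset →
      (Nat.card {C : Subgroup G | ∃ N : Subgroup G, IsMaxCyclic N ∧ C = M ⊓ N} : ℕ) ≤ m := by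
    intro M hM
    have h := le_csSup hbdd (Set.mem_image_of_mem F hM)
    simp only [hFdef] at h
    exact h
  have hFx : (Nat.card {C : Subgroup G | ∃ N : Subgroup G, IsMaxCyclic N ∧ C = Mx ⊓ N} : ℕ)
      = m := by
    have h := hFMx
    simp only [hFdef] at h
    exact h
  apply le_antisymm
  · refine le_csSup ?_ ?_
    · refine ⟨(m : ℤ), ?_⟩
      rintro b ⟨M, hM, rfl⟩
      simpa using hub M hM
    · refine ⟨Mx, hMx, ?_⟩
      simp only []
      exact_mod_cast congrArg (Nat.cast : ℕ → ℤ) hFx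
  · refine csSup_le (hmne.image _) ?_
    rintro b ⟨M, hM, rfl⟩
    simpa using hub M hM
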